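/- Assume V ≥ p(S). Fix i ∈ S and let E = {k ∈ S : γ_k = γ_i} and G = {k ∈ S : γ_k > γ_i}, and let Y ⊆ E. If p_k = γ_k·α_k for all k ∈ Y and g(G) = γ_i, then g(G ∪ Y) = g(G) and G ∪ Y ≈ G, i.e., U_k(G ∪ Y) = U_k(G) for every player k ∈ S. -/

import Mathlib

open Finset

variable {ι : Type*} [DecidableEq ι]

/-- `f(X) = β + Σ_{i ∈ X} α_i`. -/
noncomputable def fval (β : ℝ) (α : ι → ℝ) (X : Finset ι) : ℝ := β + ∑ i ∈ X, α i

/-- `p(X) = Σ_{i ∈ X} p_i`. -/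
noncomputable def psum (p : ι → ℝ) (X : Finset ι) : ℝ := ∑ i ∈ X, p i

/-- The payout `U_i(K)` in the Liquidity Event game, where `K ⊆ S` is the set of players
who cash out.  For `i ∈ K` it is `p_i` if `p(K) ≤ V` and the pro-rata `p_i·V/p(K)` otherwise;
for a converting player `i ∈ S \ K` it is `(p_i/(γ_i·f(S\K)))·(V − P(K))`
where `P(K) = min(p(K), V)` is the total cashout payment. -/
noncomputable def payout (S : Finset ι) (V β : ℝ) (p γ α : ι → ℝ)
    (K : Finset ι) (i : ι) : ℝ :=
  if i ∈ K then (if psum p K ≤ V then p i else p i * V / psum p K)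
  else (p i / (γ i * fval β α (S \ K))) * (V - min (psum p K) V)

/-- The profile obtained from `K` when player `i` unilaterally changes their move. -/
def deviate (K : Finset ι) (i : ι) : Finset ι := if i ∈ K then K.erase i else insert i K

/-- `K` is a pure strategy Nash equilibrium of the Liquidity Event game. -/
def isNash (S : Finset ι) (V β : ℝ) (p γ α : ι → ℝ) (K : Finset ι) : Prop :=
  K ⊆ S ∧ ∀ i ∈ S, payout S V β p γ α (deviate K i) i ≤ payout S V β p γ α K i

/-- `g(K) = (V − p(K)) / f(S \ K)`. -/
noncomputable def gval (S : Finset ι) (V β : ℝ) (p α : ι → ℝ) (K : Finset ι) : ℝ :=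
  (V - psum p K) / fval β α (S \ K)

/-- Condition (WD): for every nonempty `C ⊆ S`, `Σ_{i∈C} p_i/(γ_i·f(C)) < 1`. -/
def WD (S : Finset ι) (β : ℝ) (p γ α : ι → ℝ) : Prop :=
  ∀ C ⊆ S, C.Nonempty → ∑ i ∈ C, p i / (γ i * fval β α C) < 1

/-- under `V ≥ p(S)`, if `Y ⊆ E = {k : γ_k = γ_i}`, `p_k = γ_k·α_k` on `Y`
and `g(G) = γ_i` (`G = {k : γ_k > γ_i}`), then `g(G ∪ Y) = g(G)` and `G ∪ Y ≈ G`. -/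
theorem stmt5_nash_shift_equiv
    (S : Finset ι) (hS : S.Nonempty)
    (V β : ℝ) (hV : 0 < V) (hβ : 0 < β)
    (p γ α : ι → ℝ)
    (hp : ∀ i ∈ S, 0 < p i) (hγ : ∀ i ∈ S, 0 < γ i) (hα : ∀ i ∈ S, 0 ≤ α i)
    (hge : psum p S ≤ V)
    (i : ι) (hi : i ∈ S)
    (Y : Finset ι) (hYE : Y ⊆ S.filter (fun k => γ k = γ i))
    (hpY : ∀ k ∈ Y, p k = γ k * α k)
    (hg : gval S V β p α (S.filter (fun k => γ i < γ k)) = γ i) :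
    gval S V β p α (S.filter (fun k => γ i < γ k) ∪ Y)
        = gval S V β p α (S.filter (fun k => γ i < γ k)) ∧
    ∀ k ∈ S, payout S V β p γ α (S.filter (fun k => γ i < γ k) ∪ Y) k
        = payout S V β p γ α (S.filter (fun k => γ i < γ k)) k := by
  classical
  set G := S.filter (fun k => γ i < γ k) with hGdef
  have hGS : G ⊆ S := filter_subset _ _
  have hYS : Y ⊆ S := hYE.trans (filter_subset _ _)
  have hYγ : ∀ k ∈ Y, γ k = γ i := fun k hk => (mem_filter.mp (hYE hk)).2
  have hdisj : Disjoint G Y := by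
    rw [Finset.disjoint_left]
    intro k hkG hkY
    have h1 := (mem_filter.mp hkG).2
    have h2 := hYγ k hkY
    linarith
  have hYsub : Y ⊆ S \ G := fun k hk =>
    mem_sdiff.mpr ⟨hYS hk, fun h => disjoint_left.mp hdisj h hk⟩
  have hpsum_le : ∀ K : Finset ι, K ⊆ S → psum p K ≤ V := by
    intro K hK
    calc psum p K ≤ psum p S :=
          Finset.sum_le_sum_of_subset_of_nonneg hK (fun k hk _ => (hp k hk).le)
      _ ≤ V := hge
  have hfpos : ∀ X : Finset ι, X ⊆ S → 0 < fval β α X := by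
    intro X hX
    have : 0 ≤ ∑ k ∈ X, α k := Finset.sum_nonneg fun k hk => hα k (hX hk)
    unfold fval; linarith
  have hγi : 0 < γ i := hγ i hi
  have hpYsum : psum p Y = γ i * ∑ k ∈ Y, α k := by
    unfold psum
    rw [Finset.mul_sum]
    exact Finset.sum_congr rfl fun k hk => by rw [hpY k hk, hYγ k hk]
  have hpsplit : psum p (G ∪ Y) = psum p G + psum p Y := Finset.sum_union hdisj
  have hsdiff : S \ (G ∪ Y) = (S \ G) \ Y := by
    ext x; simp [mem_sdiff, mem_union]; tauto
  have hfsplit : fval β α (S \ (G ∪ Y)) = fval β α (S \ G) - ∑ k ∈ Y, α k := by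
    unfold fval
    rw [hsdiff, Finset.sum_sdiff_eq_sub hYsub]
    ring
  have hfG : 0 < fval β α (S \ G) := hfpos _ (sdiff_subset)
  have hfGY : 0 < fval β α (S \ (G ∪ Y)) := hfpos _ (sdiff_subset)
  have hkey : V - psum p G = γ i * fval β α (S \ G) := by
    have h := hg
    unfold gval at h
    rw [div_eq_iff hfG.ne'] at h
    linarith [h]
  have hnum : V - psum p (G ∪ Y) = γ i * fval β α (S \ (G ∪ Y)) := by
    rw [hpsplit, hpYsum, hfsplit, mul_sub]
    linarith [hkey]
  have hgGY : gval S V β p α (G ∪ Y) = γ i := by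
    unfold gval
    rw [hnum, mul_div_assoc, div_self hfGY.ne', mul_one]
  have hle1 : psum p (G ∪ Y) ≤ V := hpsum_le _ (union_subset hGS hYS)
  have hle2 : psum p G ≤ V := hpsum_le _ hGS
  refine ⟨by rw [hgGY, hg], ?_⟩
  intro k hk
  by_cases hkG : k ∈ G
  · have hkGY : k ∈ G ∪ Y := mem_union_left _ hkG
    simp only [payout, if_pos hkGY, if_pos hkG, if_pos hle1, if_pos hle2]
  by_cases hkY : k ∈ Y
  · have hkGY : k ∈ G ∪ Y := mem_union_right _ hkY
    simp only [payout, if_pos hkGY, if_pos hle1, if_neg hkG]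
    rw [min_eq_left hle2, hkey, hYγ k hkY]
    rw [div_mul_cancel₀]
    exact (mul_pos hγi hfG).ne'
  · have hkGY : k ∉ G ∪ Y := by simp [hkG, hkY]
    simp only [payout, if_neg hkGY, if_neg hkG]
    rw [min_eq_left hle1, min_eq_left hle2, hkey, hnum]
    have hγk : γ k ≠ 0 := (hγ k hk).ne'
    field_simp
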